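/- Let r, k be positive integers, let ξ_1 ≤ ξ_2 ≤ ⋯ ≤ ξ_{k+1} be reals with τ_j = ξ_{j+1} − ξ_j for j = 1,…,k, let c_0,…,c_{r−1} and s_1,…,s_k be reals, and define a_{j,i} by the recursion a_{0,i} = c_i for i = 0,…,r−1 and a_{j,r−p} = Σ_{i=1}^{p} a_{j−1,r−i} τ_j^{p−i}/(p−i)! + s_j τ_j^{p}/p! for j = 1,…,k and p = 1,…,r. Let φ : ℝ → ℝ be r-times differentiable on [ξ_1, ξ_{k+1}] with φ^{(i)}(ξ_1) ≥ c_i for i = 0,…,r−1 and φ^{(r)}(t) ≥ s_j for all t ∈ [ξ_j, ξ_{j+1}] and all j = 1,…,k. Then: (a) for every j = 1,…,k and every t ∈ [ξ_j, ξ_{j+1}], φ(t) ≥ Σ_{i=1}^{r} a_{j−1,r−i}(t−ξ_j)^{r−i}/(r−i)! + s_j (t−ξ_j)^{r}/r!; and (b) φ^{(r−p)}(ξ_{j+1}) ≥ a_{j,r−p} for every j = 1,…,k and every p = 1,…,r. -/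

import Mathlib

lemma mono_aux {A B : ℝ} {f g f' g' : ℝ → ℝ}
    (hf : ∀ t ∈ Set.Icc A B, HasDerivAt f (f' t) t)
    (hg : ∀ t ∈ Set.Icc A B, HasDerivAt g (g' t) t)
    (hle : ∀ t ∈ Set.Icc A B, f' t ≤ g' t)
    (h0 : f A ≤ g A) :
    ∀ t ∈ Set.Icc A B, f t ≤ g t := by
  intro t ht
  have hA : A ∈ Set.Icc A B := Set.left_mem_Icc.2 (le_trans ht.1 ht.2)
  have hmono : MonotoneOn (fun x => g x - f x) (Set.Icc A B) := by
    apply monotoneOn_of_deriv_nonneg (convex_Icc A B)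
    · exact fun x hx => ((hg x hx).continuousAt.continuousWithinAt).sub
        ((hf x hx).continuousAt.continuousWithinAt)
    · intro x hx
      rw [interior_Icc] at hx
      have hx' := Set.Ioo_subset_Icc_self hx
      exact ((hg x hx').sub (hf x hx')).differentiableAt.differentiableWithinAt
    · intro x hx
      rw [interior_Icc] at hx
      have hx' := Set.Ioo_subset_Icc_self hx
      rw [show deriv (fun x => g x - f x) x = g' x - f' x from ((hg x hx').sub (hf x hx')).deriv]
      linarith [hle x hx']
  have := hmono hA ht ht.1
  simp only at this
  linarith

lemma hasDerivAt_monomial (c A : ℝ) (m : ℕ) (t : ℝ) :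
    HasDerivAt (fun t => c * (t - A) ^ (m + 1) / (Nat.factorial (m + 1) : ℝ))
      (c * (t - A) ^ m / (Nat.factorial m : ℝ)) t := by
  have h : HasDerivAt (fun t => (t - A) ^ (m + 1)) (((m : ℝ) + 1) * (t - A) ^ m) t := by
    simpa using ((hasDerivAt_id t).sub_const A).fun_pow (m + 1)
  have h2 := (h.const_mul c).div_const (Nat.factorial (m + 1) : ℝ)
  refine h2.congr_deriv ?_
  have hm : (Nat.factorial m : ℝ) ≠ 0 := Nat.cast_ne_zero.2 (Nat.factorial_ne_zero m)
  have hm1 : (Nat.factorial (m+1) : ℝ) = ((m:ℝ)+1) * (Nat.factorial m : ℝ) := by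
    push_cast [Nat.factorial_succ]; ring
  rw [hm1]
  field_simp

lemma seg (r : ℕ) (A B : ℝ) (b : ℕ → ℝ) (s : ℝ) (φ : ℝ → ℝ)
    (hdiff : ∀ i < r, ∀ t ∈ Set.Icc A B,
      HasDerivAt (iteratedDeriv i φ) (iteratedDeriv (i + 1) φ t) t)
    (hinit : ∀ i < r, iteratedDeriv i φ A ≥ b i)
    (hs : ∀ t ∈ Set.Icc A B, iteratedDeriv r φ t ≥ s) :
    ∀ p, p ≤ r → ∀ t ∈ Set.Icc A B,
      iteratedDeriv (r - p) φ t ≥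
        (∑ i ∈ Finset.Icc 1 p, b (r - i) * (t - A) ^ (p - i) / (Nat.factorial (p - i) : ℝ))
          + s * (t - A) ^ p / (Nat.factorial p : ℝ) := by
  intro p
  induction p with
  | zero =>
    intro _ t ht
    simpa using hs t ht
  | succ p ih =>
    intro hp t ht
    have hpr : p ≤ r := Nat.le_of_succ_le hp
    have hlt : r - (p + 1) < r := by omega
    -- the polynomial F(p+1) and its derivative F p
    set G : ℝ → ℝ := fun t =>
      (∑ i ∈ Finset.Icc 1 (p + 1),
        b (r - i) * (t - A) ^ (p + 1 - i) / (Nat.factorial (p + 1 - i) : ℝ))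
        + s * (t - A) ^ (p + 1) / (Nat.factorial (p + 1) : ℝ) with hG
    have hGderiv : ∀ t : ℝ, HasDerivAt G
        ((∑ i ∈ Finset.Icc 1 p,
          b (r - i) * (t - A) ^ (p - i) / (Nat.factorial (p - i) : ℝ))
          + s * (t - A) ^ p / (Nat.factorial p : ℝ)) t := by
      intro t
      have hsum : HasDerivAt (fun t => ∑ i ∈ Finset.Icc 1 (p + 1),
          b (r - i) * (t - A) ^ (p + 1 - i) / (Nat.factorial (p + 1 - i) : ℝ))
          (∑ i ∈ Finset.Icc 1 (p + 1),
            if i ≤ p then b (r - i) * (t - A) ^ (p - i) / (Nat.factorial (p - i) : ℝ) else 0) t := by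
        apply HasDerivAt.fun_sum
        intro i hi
        rw [Finset.mem_Icc] at hi
        by_cases hip : i ≤ p
        · rw [if_pos hip]
          have he : p + 1 - i = (p - i) + 1 := by omega
          rw [he]
          exact hasDerivAt_monomial (b (r - i)) A (p - i) t
        · rw [if_neg hip]
          have hi1 : i = p + 1 := by omega
          have he : p + 1 - i = 0 := by omega
          simp only [he, pow_zero, Nat.factorial_zero, Nat.cast_one, mul_one, div_one]
          exact hasDerivAt_const t (b (r - i))
      have hsum2 : (∑ i ∈ Finset.Icc 1 (p + 1),
            if i ≤ p then b (r - i) * (t - A) ^ (p - i) / (Nat.factorial (p - i) : ℝ) else 0)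
          = ∑ i ∈ Finset.Icc 1 p,
            b (r - i) * (t - A) ^ (p - i) / (Nat.factorial (p - i) : ℝ) := by
        rw [Finset.sum_Icc_succ_top (by omega : 1 ≤ p + 1)]
        rw [if_neg (by omega), add_zero]
        exact Finset.sum_congr rfl fun i hi => by
          rw [Finset.mem_Icc] at hi; rw [if_pos hi.2]
      rw [hsum2] at hsum
      exact hsum.add (hasDerivAt_monomial s A p t)
    -- value of G at A
    have hGA : G A = b (r - (p + 1)) := by
      rw [hG]
      simp only
      rw [Finset.sum_Icc_succ_top (by omega : 1 ≤ p + 1)]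
      rw [Nat.sub_self, pow_zero, Nat.factorial_zero]
      have h1 : ∀ i ∈ Finset.Icc 1 p,
          b (r - i) * (A - A) ^ (p + 1 - i) / (Nat.factorial (p + 1 - i) : ℝ) = 0 := by
        intro i hi
        rw [Finset.mem_Icc] at hi
        rw [sub_self, zero_pow (by omega : p + 1 - i ≠ 0)]
        ring
      rw [Finset.sum_congr rfl h1, Finset.sum_const_zero]
      rw [sub_self, zero_pow (by omega : p + 1 ≠ 0)]
      simp
    -- apply comparison
    have := mono_aux (f := G) (g := iteratedDeriv (r - (p + 1)) φ)
      (f' := fun t => (∑ i ∈ Finset.Icc 1 p,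
          b (r - i) * (t - A) ^ (p - i) / (Nat.factorial (p - i) : ℝ))
          + s * (t - A) ^ p / (Nat.factorial p : ℝ))
      (g' := fun t => iteratedDeriv (r - p) φ t)
      (fun t ht => hGderiv t)
      (fun t ht => by
        have h := hdiff (r - (p + 1)) hlt t ht
        have : r - (p + 1) + 1 = r - p := by omega
        rwa [this] at h)
      (fun t ht => ih hpr t ht)
      (by rw [hGA]; exact hinit (r - (p + 1)) hlt)
      t ht
    exact this

/-- **Multi-segment propagation estimate (inductive core of the proof of Theorem 1 of
the paper).** Per-segment lower bounds `s j` on the `r`-th derivative of the barrier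
value `φ` propagate through the partition points `ξ j` via the recursion defining the
constants `a j i`, yielding (a) the polynomial lower bounds on `φ` on each segment and
(b) the lower bounds `a j (r-p)` on the derivatives at the partition points. -/
theorem stmt_11
    (r k : ℕ) (hr : 0 < r) (hk : 0 < k)
    (ξ τ s c : ℕ → ℝ) (a : ℕ → ℕ → ℝ)
    (hξmono : ∀ j ∈ Finset.Icc 1 k, ξ j ≤ ξ (j + 1))
    (hτ : ∀ j ∈ Finset.Icc 1 k, τ j = ξ (j + 1) - ξ j)
    (ha0 : ∀ i < r, a 0 i = c i)
    (harec : ∀ j ∈ Finset.Icc 1 k, ∀ p ∈ Finset.Icc 1 r,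
      a j (r - p) = (∑ i ∈ Finset.Icc 1 p,
          a (j - 1) (r - i) * τ j ^ (p - i) / (Nat.factorial (p - i) : ℝ))
        + s j * τ j ^ p / (Nat.factorial p : ℝ))
    (φ : ℝ → ℝ)
    -- φ is r-times differentiable on [ξ 1, ξ (k+1)]
    (hdiff : ∀ i < r, ∀ t ∈ Set.Icc (ξ 1) (ξ (k + 1)),
      HasDerivAt (iteratedDeriv i φ) (iteratedDeriv (i + 1) φ t) t)
    (hinit : ∀ i < r, iteratedDeriv i φ (ξ 1) ≥ c i)
    (hs : ∀ j ∈ Finset.Icc 1 k, ∀ t ∈ Set.Icc (ξ j) (ξ (j + 1)),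
      iteratedDeriv r φ t ≥ s j) :
    -- (a) polynomial lower bound on φ on each segment
    (∀ j ∈ Finset.Icc 1 k, ∀ t ∈ Set.Icc (ξ j) (ξ (j + 1)),
      φ t ≥ (∑ i ∈ Finset.Icc 1 r,
          a (j - 1) (r - i) * (t - ξ j) ^ (r - i) / (Nat.factorial (r - i) : ℝ))
        + s j * (t - ξ j) ^ r / (Nat.factorial r : ℝ)) ∧
    -- (b) derivative lower bounds at the partition points
    (∀ j ∈ Finset.Icc 1 k, ∀ p ∈ Finset.Icc 1 r,
      iteratedDeriv (r - p) φ (ξ (j + 1)) ≥ a j (r - p)) := by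
  -- monotonicity of the partition points
  have hmono : ∀ n, n ≤ k + 1 → ∀ m, 1 ≤ m → m ≤ n → ξ m ≤ ξ n := by
    intro n
    induction n with
    | zero => intro _ m hm hmn; omega
    | succ n ih =>
      intro hn m hm hmn
      rcases Nat.lt_or_ge m (n + 1) with h | h
      · have h1 : ξ m ≤ ξ n := ih (by omega) m hm (by omega)
        have h2 : ξ n ≤ ξ (n + 1) := hξmono n (Finset.mem_Icc.2 ⟨by omega, by omega⟩)
        linarith
      · have : m = n + 1 := by omega
        simp [this]
  -- per-segment machinery packaged
  have hsegj : ∀ j ∈ Finset.Icc 1 k,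
      (∀ i < r, iteratedDeriv i φ (ξ j) ≥ a (j - 1) i) →
      ∀ p, p ≤ r → ∀ t ∈ Set.Icc (ξ j) (ξ (j + 1)),
        iteratedDeriv (r - p) φ t ≥
          (∑ i ∈ Finset.Icc 1 p,
            a (j - 1) (r - i) * (t - ξ j) ^ (p - i) / (Nat.factorial (p - i) : ℝ))
            + s j * (t - ξ j) ^ p / (Nat.factorial p : ℝ) := by
    intro j hj hini
    rw [Finset.mem_Icc] at hj
    have hsub : Set.Icc (ξ j) (ξ (j + 1)) ⊆ Set.Icc (ξ 1) (ξ (k + 1)) :=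
      Set.Icc_subset_Icc (hmono j (by omega) 1 le_rfl hj.1)
        (hmono (k + 1) le_rfl (j + 1) (by omega) (by omega))
    exact seg r (ξ j) (ξ (j + 1)) (a (j - 1)) (s j) φ
      (fun i hi t ht => hdiff i hi t (hsub ht)) hini
      (hs j (Finset.mem_Icc.2 hj))
  -- claim at partition points
  have claim : ∀ j, 1 ≤ j → j ≤ k + 1 → ∀ i < r, iteratedDeriv i φ (ξ j) ≥ a (j - 1) i := by
    intro j
    induction j with
    | zero => omega
    | succ j ih =>
      intro _ hj i hi
      rcases Nat.eq_zero_or_pos j with h0 | hjpos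
      · subst h0
        simpa [ha0 i hi] using hinit i hi
      · have hjk : j ≤ k := by omega
        have hjmem : j ∈ Finset.Icc 1 k := Finset.mem_Icc.2 ⟨hjpos, hjk⟩
        set p := r - i with hp
        have hp1 : 1 ≤ p := by omega
        have hpr : p ≤ r := by omega
        have hrp : r - p = i := by omega
        have hB : ξ (j + 1) ∈ Set.Icc (ξ j) (ξ (j + 1)) :=
          Set.right_mem_Icc.2 (hξmono j hjmem)
        have hval := hsegj j hjmem (ih hjpos (by omega)) p hpr (ξ (j + 1)) hB
        show iteratedDeriv i φ (ξ (j + 1)) ≥ a ((j+1) - 1) i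
        have hj1 : (j + 1) - 1 = j := rfl
        rw [hj1, ← hrp, harec j hjmem p (Finset.mem_Icc.2 ⟨hp1, hpr⟩), hτ j hjmem]
        exact hval
  constructor
  · intro j hj t ht
    rw [Finset.mem_Icc] at hj
    have := hsegj j (Finset.mem_Icc.2 hj) (claim j hj.1 (by omega)) r le_rfl t ht
    rwa [Nat.sub_self, iteratedDeriv_zero] at this
  · intro j hj p hp
    rw [Finset.mem_Icc] at hj hp
    have hB : ξ (j + 1) ∈ Set.Icc (ξ j) (ξ (j + 1)) :=
      Set.right_mem_Icc.2 (hξmono j (Finset.mem_Icc.2 hj))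
    have := hsegj j (Finset.mem_Icc.2 hj) (claim j hj.1 (by omega)) p hp.2 (ξ (j + 1)) hB
    rw [harec j (Finset.mem_Icc.2 hj) p (Finset.mem_Icc.2 hp), hτ j (Finset.mem_Icc.2 hj)]
    exact this
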